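/- The optimization problem: minimize W(s) = λΣ_γ φ_γ log(ε_γ + Σ_θ α_γ(θ)s(θ)v_γ(θ)) − Σ_θ τ(θ)ρ(θ)log s(θ) + Σ_θ τ(θ)s(θ) over s ∈ {s : 0 < s(θ) ≤ ρ(θ) for all θ}, has a unique solution s*, and s* satisfies 0 < s*(θ) < ρ(θ) for all θ. -/

import Mathlib

open Finset Real

lemma log_sum_exp_convex {Θ : Type*} [Fintype Θ] (εg : ℝ) (c : Θ → ℝ)
    (hε : 0 < εg) (hc : ∀ θ, 0 < c θ) (x y : Θ → ℝ) (a b : ℝ)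
    (ha : 0 < a) (hb : 0 < b) (hab : a + b = 1) :
    Real.log (εg + ∑ θ, c θ * Real.exp (a * x θ + b * y θ)) ≤
      a * Real.log (εg + ∑ θ, c θ * Real.exp (x θ))
        + b * Real.log (εg + ∑ θ, c θ * Real.exp (y θ)) := by
  set S := εg + ∑ θ, c θ * Real.exp (x θ) with hSdef
  set T := εg + ∑ θ, c θ * Real.exp (y θ) with hTdef
  have hS : 0 < S := by
    have : (0:ℝ) ≤ ∑ θ, c θ * Real.exp (x θ) :=
      Finset.sum_nonneg fun θ _ => mul_nonneg (hc θ).le (Real.exp_pos _).le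
    linarith
  have hT : 0 < T := by
    have : (0:ℝ) ≤ ∑ θ, c θ * Real.exp (y θ) :=
      Finset.sum_nonneg fun θ _ => mul_nonneg (hc θ).le (Real.exp_pos _).le
    linarith
  have key : ∀ p q : ℝ, 0 ≤ p → 0 ≤ q →
      p ^ a * q ^ b ≤ S ^ a * T ^ b * (a * (p / S) + b * (q / T)) := by
    intro p q hp hq
    have h1 : p ^ a * q ^ b = (S ^ a * T ^ b) * ((p / S) ^ a * (q / T) ^ b) := by
      rw [Real.div_rpow hp hS.le, Real.div_rpow hq hT.le]
      have h2 : S ^ a ≠ 0 := by positivity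
      have h3 : T ^ b ≠ 0 := by positivity
      field_simp
    rw [h1]
    exact mul_le_mul_of_nonneg_left
      (Real.geom_mean_le_arith_mean2_weighted ha.le hb.le (by positivity) (by positivity) hab)
      (by positivity)
  have main : εg + ∑ θ, c θ * Real.exp (a * x θ + b * y θ) ≤ S ^ a * T ^ b := by
    have step1 : εg + ∑ θ, c θ * Real.exp (a * x θ + b * y θ)
        = εg ^ a * εg ^ b + ∑ θ, (c θ * Real.exp (x θ)) ^ a * (c θ * Real.exp (y θ)) ^ b := by
      congr 1
      · rw [← Real.rpow_add hε, hab, Real.rpow_one]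
      · refine Finset.sum_congr rfl fun θ _ => ?_
        rw [Real.mul_rpow (hc θ).le (Real.exp_pos _).le,
            Real.mul_rpow (hc θ).le (Real.exp_pos _).le,
            Real.rpow_def_of_pos (Real.exp_pos _), Real.rpow_def_of_pos (Real.exp_pos _),
            Real.rpow_def_of_pos (hc θ), Real.rpow_def_of_pos (hc θ),
            Real.log_exp, Real.log_exp]
        conv_lhs => rw [← Real.exp_log (hc θ)]
        rw [← Real.exp_add, ← Real.exp_add, ← Real.exp_add, ← Real.exp_add]
        congr 1
        linear_combination (- Real.log (c θ)) * hab
    have step2 : εg ^ a * εg ^ b + ∑ θ, (c θ * Real.exp (x θ)) ^ a * (c θ * Real.exp (y θ)) ^ b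
        ≤ S ^ a * T ^ b * (a * (εg / S) + b * (εg / T))
          + ∑ θ, S ^ a * T ^ b *
            (a * (c θ * Real.exp (x θ) / S) + b * (c θ * Real.exp (y θ) / T)) :=
      add_le_add (key _ _ hε.le hε.le)
        (Finset.sum_le_sum fun θ _ => key _ _
          (mul_nonneg (hc θ).le (Real.exp_pos _).le)
          (mul_nonneg (hc θ).le (Real.exp_pos _).le))
    have step3 : S ^ a * T ^ b * (a * (εg / S) + b * (εg / T))
          + ∑ θ, S ^ a * T ^ b *
            (a * (c θ * Real.exp (x θ) / S) + b * (c θ * Real.exp (y θ) / T))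
        = S ^ a * T ^ b := by
      have e1 : ∑ θ, S ^ a * T ^ b *
            (a * (c θ * Real.exp (x θ) / S) + b * (c θ * Real.exp (y θ) / T))
          = (S ^ a * T ^ b * a / S) * (∑ θ, c θ * Real.exp (x θ))
            + (S ^ a * T ^ b * b / T) * (∑ θ, c θ * Real.exp (y θ)) := by
        rw [Finset.sum_congr rfl (fun θ _ => by
          ring : ∀ θ ∈ Finset.univ, S ^ a * T ^ b *
            (a * (c θ * Real.exp (x θ) / S) + b * (c θ * Real.exp (y θ) / T))
            = (S ^ a * T ^ b * a / S) * (c θ * Real.exp (x θ))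
              + (S ^ a * T ^ b * b / T) * (c θ * Real.exp (y θ))),
          Finset.sum_add_distrib, ← Finset.mul_sum, ← Finset.mul_sum]
      have hU : (∑ θ, c θ * Real.exp (x θ)) = S - εg := by rw [hSdef]; ring
      have hW : (∑ θ, c θ * Real.exp (y θ)) = T - εg := by rw [hTdef]; ring
      rw [e1, hU, hW]
      have d1 : εg / S + (S - εg) / S = 1 := by
        rw [← add_div]
        simp [hS.ne']
      have d2 : εg / T + (T - εg) / T = 1 := by
        rw [← add_div]
        simp [hT.ne']
      have hP : S ^ a * T ^ b * (a * (εg / S) + b * (εg / T))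
          + ((S ^ a * T ^ b * a / S) * (S - εg) + (S ^ a * T ^ b * b / T) * (T - εg))
          = S ^ a * T ^ b * (a * (εg / S + (S - εg) / S) + b * (εg / T + (T - εg) / T)) := by
        ring
      rw [hP, d1, d2, mul_one, mul_one, hab, mul_one]
    linarith [step1, step2, step3]
  have hL : 0 < εg + ∑ θ, c θ * Real.exp (a * x θ + b * y θ) := by
    have : (0:ℝ) ≤ ∑ θ, c θ * Real.exp (a * x θ + b * y θ) :=
      Finset.sum_nonneg fun θ _ => mul_nonneg (hc θ).le (Real.exp_pos _).le
    linarith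
  calc Real.log (εg + ∑ θ, c θ * Real.exp (a * x θ + b * y θ))
      ≤ Real.log (S ^ a * T ^ b) := Real.log_le_log hL main
    _ = a * Real.log S + b * Real.log T := by
        rw [Real.log_mul (by positivity) (by positivity), Real.log_rpow hS, Real.log_rpow hT]

variable {Θ Γ : Type*} [Fintype Θ] [Fintype Γ]

noncomputable def W (lam : ℝ) (φ ε : Γ → ℝ) (α v : Γ → Θ → ℝ) (τ ρ : Θ → ℝ)
    (s : Θ → ℝ) : ℝ :=
  lam * ∑ γ : Γ, φ γ * Real.log (ε γ + ∑ θ : Θ, α γ θ * s θ * v γ θ)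
    - ∑ θ : Θ, τ θ * ρ θ * Real.log (s θ) + ∑ θ : Θ, τ θ * s θ

lemma sum_update_aux {Θ : Type*} [Fintype Θ] [DecidableEq Θ] (F : Θ → ℝ → ℝ)
    (s : Θ → ℝ) (θ0 : Θ) (x : ℝ) :
    ∑ θ, F θ (Function.update s θ0 x θ)
      = F θ0 x + ∑ θ ∈ Finset.univ.erase θ0, F θ (s θ) := by
  rw [← Finset.add_sum_erase _ (fun θ => F θ (Function.update s θ0 x θ)) (Finset.mem_univ θ0),
    Function.update_self]
  congr 1
  refine Finset.sum_congr rfl fun θ hθ => ?_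
  rw [Function.update_of_ne (Finset.ne_of_mem_erase hθ)]

noncomputable def gfun (lam : ℝ) (φ ε : Γ → ℝ) (α v : Γ → Θ → ℝ) (τ ρ : Θ → ℝ)
    (y : Θ → ℝ) : ℝ :=
  lam * ∑ γ : Γ, φ γ * Real.log (ε γ + ∑ θ : Θ, (α γ θ * v γ θ) * Real.exp (y θ))
    - ∑ θ : Θ, τ θ * ρ θ * y θ + ∑ θ : Θ, τ θ * Real.exp (y θ)

lemma W_exp_eq_gfun (lam : ℝ) (φ ε : Γ → ℝ) (α v : Γ → Θ → ℝ) (τ ρ : Θ → ℝ)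
    (y : Θ → ℝ) : W lam φ ε α v τ ρ (fun θ => Real.exp (y θ)) = gfun lam φ ε α v τ ρ y := by
  unfold W gfun
  simp only [Real.log_exp]
  have : ∀ γ, ∑ θ : Θ, α γ θ * Real.exp (y θ) * v γ θ
      = ∑ θ : Θ, (α γ θ * v γ θ) * Real.exp (y θ) :=
    fun γ => Finset.sum_congr rfl fun θ _ => by ring
  simp only [this]

lemma gfun_strictConvexOn (lam : ℝ) (φ ε : Γ → ℝ) (α v : Γ → Θ → ℝ) (τ ρ : Θ → ℝ)
    [Nonempty Θ]
    (hlam : 0 < lam) (hφ : ∀ γ, 0 < φ γ) (hε : ∀ γ, 0 < ε γ)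
    (hα : ∀ γ θ, 0 < α γ θ) (hv : ∀ γ θ, 0 < v γ θ) (hτ : ∀ θ, 0 < τ θ) :
    StrictConvexOn ℝ Set.univ (gfun lam φ ε α v τ ρ (Γ := Γ)) := by
  refine ⟨convex_univ, fun x _ y _ hxy a b ha hb hab => ?_⟩
  simp only [smul_eq_mul, Pi.add_apply, Pi.smul_apply]
  unfold gfun
  simp only [Pi.add_apply, Pi.smul_apply, smul_eq_mul]
  -- part 1 : log terms
  have h1 : ∀ γ, Real.log (ε γ + ∑ θ : Θ, (α γ θ * v γ θ) * Real.exp (a * x θ + b * y θ))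
      ≤ a * Real.log (ε γ + ∑ θ : Θ, (α γ θ * v γ θ) * Real.exp (x θ))
        + b * Real.log (ε γ + ∑ θ : Θ, (α γ θ * v γ θ) * Real.exp (y θ)) := fun γ =>
    log_sum_exp_convex (ε γ) (fun θ => α γ θ * v γ θ) (hε γ)
      (fun θ => mul_pos (hα γ θ) (hv γ θ)) x y a b ha hb hab
  have h1' : ∑ γ : Γ, φ γ * Real.log (ε γ + ∑ θ : Θ, (α γ θ * v γ θ) * Real.exp (a * x θ + b * y θ))
      ≤ a * ∑ γ : Γ, φ γ * Real.log (ε γ + ∑ θ : Θ, (α γ θ * v γ θ) * Real.exp (x θ))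
        + b * ∑ γ : Γ, φ γ * Real.log (ε γ + ∑ θ : Θ, (α γ θ * v γ θ) * Real.exp (y θ)) := by
    rw [Finset.mul_sum, Finset.mul_sum, ← Finset.sum_add_distrib]
    refine Finset.sum_le_sum fun γ _ => ?_
    have := mul_le_mul_of_nonneg_left (h1 γ) (hφ γ).le
    linarith [this]
  -- part 2 : linear terms
  have h2 : ∑ θ : Θ, τ θ * ρ θ * (a * x θ + b * y θ)
      = a * ∑ θ : Θ, τ θ * ρ θ * x θ + b * ∑ θ : Θ, τ θ * ρ θ * y θ := by
    rw [Finset.mul_sum, Finset.mul_sum, ← Finset.sum_add_distrib]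
    exact Finset.sum_congr rfl fun θ _ => by ring
  -- part 3 : strict exp terms
  have h3 : ∑ θ : Θ, τ θ * Real.exp (a * x θ + b * y θ)
      < a * ∑ θ : Θ, τ θ * Real.exp (x θ) + b * ∑ θ : Θ, τ θ * Real.exp (y θ) := by
    rw [Finset.mul_sum, Finset.mul_sum, ← Finset.sum_add_distrib]
    obtain ⟨θ0, hθ0⟩ := Function.ne_iff.mp hxy
    refine Finset.sum_lt_sum (fun θ _ => ?_) ⟨θ0, Finset.mem_univ θ0, ?_⟩
    · have := convexOn_exp.2 (Set.mem_univ (x θ)) (Set.mem_univ (y θ)) ha.le hb.le hab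
      simp only [smul_eq_mul] at this
      have := mul_le_mul_of_nonneg_left this (hτ θ).le
      linarith [this]
    · have := strictConvexOn_exp.2 (Set.mem_univ (x θ0)) (Set.mem_univ (y θ0)) hθ0 ha hb hab
      simp only [smul_eq_mul] at this
      have := mul_lt_mul_of_pos_left this (hτ θ0)
      linarith [this]
  have h1'' := mul_le_mul_of_nonneg_left h1' hlam.le
  have hring : a * (lam * ∑ γ : Γ, φ γ * Real.log (ε γ + ∑ θ : Θ, (α γ θ * v γ θ) * Real.exp (x θ))
        - ∑ θ : Θ, τ θ * ρ θ * x θ + ∑ θ : Θ, τ θ * Real.exp (x θ))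
      + b * (lam * ∑ γ : Γ, φ γ * Real.log (ε γ + ∑ θ : Θ, (α γ θ * v γ θ) * Real.exp (y θ))
        - ∑ θ : Θ, τ θ * ρ θ * y θ + ∑ θ : Θ, τ θ * Real.exp (y θ))
      = lam * (a * ∑ γ : Γ, φ γ * Real.log (ε γ + ∑ θ : Θ, (α γ θ * v γ θ) * Real.exp (x θ))
          + b * ∑ γ : Γ, φ γ * Real.log (ε γ + ∑ θ : Θ, (α γ θ * v γ θ) * Real.exp (y θ)))
        - (a * ∑ θ : Θ, τ θ * ρ θ * x θ + b * ∑ θ : Θ, τ θ * ρ θ * y θ)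
        + (a * ∑ θ : Θ, τ θ * Real.exp (x θ) + b * ∑ θ : Θ, τ θ * Real.exp (y θ)) := by
    ring
  rw [hring]
  linarith [h1'', h2, h3]
lemma gfun_continuous (lam : ℝ) (φ ε : Γ → ℝ) (α v : Γ → Θ → ℝ) (τ ρ : Θ → ℝ)
    (hε : ∀ γ, 0 < ε γ) (hα : ∀ γ θ, 0 < α γ θ) (hv : ∀ γ θ, 0 < v γ θ) :
    Continuous (gfun lam φ ε α v τ ρ (Γ := Γ)) := by
  unfold gfun
  have hpos : ∀ (γ : Γ) (y : Θ → ℝ),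
      0 < ε γ + ∑ θ : Θ, (α γ θ * v γ θ) * Real.exp (y θ) := by
    intro γ y
    have : (0:ℝ) ≤ ∑ θ : Θ, (α γ θ * v γ θ) * Real.exp (y θ) :=
      Finset.sum_nonneg fun θ _ =>
        mul_nonneg (mul_pos (hα γ θ) (hv γ θ)).le (Real.exp_pos _).le
    linarith [hε γ]
  refine Continuous.add (Continuous.sub (continuous_const.mul ?_) ?_) ?_
  · refine continuous_finset_sum _ fun γ _ => continuous_const.mul ?_
    refine Continuous.log ?_ fun y => (hpos γ y).ne'
    exact continuous_const.add (continuous_finset_sum _ fun θ _ =>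
      continuous_const.mul (Real.continuous_exp.comp (continuous_apply θ)))
  · exact continuous_finset_sum _ fun θ _ => continuous_const.mul (continuous_apply θ)
  · exact continuous_finset_sum _ fun θ _ =>
      continuous_const.mul (Real.continuous_exp.comp (continuous_apply θ))

theorem W_unique_interior_minimizer (lam : ℝ) (φ ε : Γ → ℝ) (α v : Γ → Θ → ℝ)
    (τ ρ : Θ → ℝ) [Nonempty Θ] [Nonempty Γ]
    (hlam : 0 < lam) (hφ : ∀ γ, 0 < φ γ) (hε : ∀ γ, 0 < ε γ)
    (hα : ∀ γ θ, 0 < α γ θ) (hv : ∀ γ θ, 0 < v γ θ)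
    (hτ : ∀ θ, 0 < τ θ) (hρ : ∀ θ, 0 < ρ θ) :
    (∃! s : Θ → ℝ, (∀ θ, 0 < s θ ∧ s θ ≤ ρ θ) ∧
      ∀ z : Θ → ℝ, (∀ θ, 0 < z θ ∧ z θ ≤ ρ θ) →
        W lam φ ε α v τ ρ s ≤ W lam φ ε α v τ ρ z) ∧
    (∀ s : Θ → ℝ, ((∀ θ, 0 < s θ ∧ s θ ≤ ρ θ) ∧
      ∀ z : Θ → ℝ, (∀ θ, 0 < z θ ∧ z θ ≤ ρ θ) →
        W lam φ ε α v τ ρ s ≤ W lam φ ε α v τ ρ z) →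
      ∀ θ, 0 < s θ ∧ s θ < ρ θ) := by
  classical
  set g : (Θ → ℝ) → ℝ := gfun lam φ ε α v τ ρ with hgdef
  set L : Θ → ℝ := fun θ => Real.log (ρ θ) with hLdef
  set K : Set (Θ → ℝ) := {y | ∀ θ, y θ ≤ L θ} with hKdef
  have hWg : ∀ y : Θ → ℝ, W lam φ ε α v τ ρ (fun θ => Real.exp (y θ)) = g y :=
    fun y => W_exp_eq_gfun lam φ ε α v τ ρ y
  have hWs : ∀ s : Θ → ℝ, (∀ θ, 0 < s θ) →
      W lam φ ε α v τ ρ s = g (fun θ => Real.log (s θ)) := by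
    intro s hs
    rw [← hWg]
    congr 1
    funext θ
    rw [Real.exp_log (hs θ)]
  have hSK : ∀ s : Θ → ℝ, (∀ θ, 0 < s θ ∧ s θ ≤ ρ θ) →
      (fun θ => Real.log (s θ)) ∈ K := by
    intro s hs θ
    exact Real.log_le_log (hs θ).1 (hs θ).2
  have hKS : ∀ y ∈ K, (∀ θ, 0 < Real.exp (y θ) ∧ Real.exp (y θ) ≤ ρ θ) := by
    intro y hy θ
    refine ⟨Real.exp_pos _, ?_⟩
    calc Real.exp (y θ) ≤ Real.exp (L θ) := Real.exp_le_exp.mpr (hy θ)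
      _ = ρ θ := Real.exp_log (hρ θ)
  -- existence of a minimizer of g on K
  set c : Θ → ℝ := fun θ => τ θ * ρ θ with hcdef
  have hcpos : ∀ θ, 0 < c θ := fun θ => mul_pos (hτ θ) (hρ θ)
  set cmin : ℝ := Finset.univ.inf' Finset.univ_nonempty c with hcmindef
  have hcmin : 0 < cmin := by
    rw [hcmindef, Finset.lt_inf'_iff]
    exact fun θ _ => hcpos θ
  have hcmin_le : ∀ θ, cmin ≤ c θ := fun θ => Finset.inf'_le _ (Finset.mem_univ θ)
  set A : ℝ := lam * ∑ γ : Γ, φ γ * Real.log (ε γ) with hAdef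
  set E : ℝ := ∑ θ : Θ, c θ * |L θ| with hEdef
  set m : ℝ := min (min 0 (Finset.univ.inf' Finset.univ_nonempty L))
      (-(g L - A + E + 1) / cmin) with hmdef
  have hm0 : m ≤ 0 := le_trans (min_le_left _ _) (min_le_left _ _)
  have hmL : ∀ θ, m ≤ L θ := fun θ =>
    le_trans (le_trans (min_le_left _ _) (min_le_right _ _))
      (Finset.inf'_le _ (Finset.mem_univ θ))
  have hm1 : cmin * m ≤ -(g L - A + E + 1) := by
    have := min_le_right (min 0 (Finset.univ.inf' Finset.univ_nonempty L))
      (-(g L - A + E + 1) / cmin)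
    rw [le_div_iff₀ hcmin] at this
    calc cmin * m = m * cmin := by ring
      _ ≤ -(g L - A + E + 1) := this
  have hlower : ∀ y : Θ → ℝ, A - ∑ θ : Θ, c θ * y θ ≤ g y := by
    intro y
    rw [hgdef]
    unfold gfun
    have t1 : A ≤ lam * ∑ γ : Γ, φ γ *
        Real.log (ε γ + ∑ θ : Θ, (α γ θ * v γ θ) * Real.exp (y θ)) := by
      rw [hAdef]
      refine mul_le_mul_of_nonneg_left (Finset.sum_le_sum fun γ _ => ?_) hlam.le
      refine mul_le_mul_of_nonneg_left (Real.log_le_log (hε γ) ?_) (hφ γ).le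
      have : (0:ℝ) ≤ ∑ θ : Θ, (α γ θ * v γ θ) * Real.exp (y θ) :=
        Finset.sum_nonneg fun θ _ =>
          mul_nonneg (mul_pos (hα γ θ) (hv γ θ)).le (Real.exp_pos _).le
      linarith
    have t2 : (0:ℝ) ≤ ∑ θ : Θ, τ θ * Real.exp (y θ) :=
      Finset.sum_nonneg fun θ _ => mul_nonneg (hτ θ).le (Real.exp_pos _).le
    have t3 : ∑ θ : Θ, τ θ * ρ θ * y θ = ∑ θ : Θ, c θ * y θ :=
      Finset.sum_congr rfl fun θ _ => by rw [hcdef]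
    linarith [t1, t2, t3.le, t3.ge]
  have hescape : ∀ y ∈ K, ∀ θ0, y θ0 < m → g L + 1 ≤ g y := by
    intro y hy θ0 hθ0
    have hsum : ∑ θ : Θ, c θ * y θ ≤ cmin * m + E := by
      have e1 : ∑ θ : Θ, c θ * y θ
          = c θ0 * y θ0 + ∑ θ ∈ Finset.univ.erase θ0, c θ * y θ :=
        (Finset.add_sum_erase _ _ (Finset.mem_univ θ0)).symm
      have e2 : c θ0 * y θ0 ≤ cmin * m := by
        calc c θ0 * y θ0 ≤ c θ0 * m := mul_le_mul_of_nonneg_left hθ0.le (hcpos θ0).le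
          _ ≤ cmin * m := mul_le_mul_of_nonpos_right (hcmin_le θ0) hm0
      have e3 : ∑ θ ∈ Finset.univ.erase θ0, c θ * y θ ≤ E := by
        rw [hEdef]
        refine le_trans (Finset.sum_le_sum fun θ _ => ?_)
          (Finset.sum_le_sum_of_subset_of_nonneg (Finset.subset_univ _)
            fun θ _ _ => mul_nonneg (hcpos θ).le (abs_nonneg _))
        calc c θ * y θ ≤ c θ * L θ := mul_le_mul_of_nonneg_left (hy θ) (hcpos θ).le
          _ ≤ c θ * |L θ| := mul_le_mul_of_nonneg_left (le_abs_self _) (hcpos θ).le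
      linarith
    have := hlower y
    linarith [hm1]
  set B : Set (Θ → ℝ) := Set.Icc (fun _ => m) L with hBdef
  have hLB : L ∈ B := by
    constructor
    · intro θ; exact hmL θ
    · exact le_refl L
  obtain ⟨y0, hy0B, hy0min⟩ := (isCompact_Icc (a := fun (_ : Θ) => m) (b := L)).exists_isMinOn
    ⟨L, hLB⟩ (gfun_continuous lam φ ε α v τ ρ hε hα hv).continuousOn
  have hy0K : y0 ∈ K := fun θ => hy0B.2 θ
  have hy0minK : ∀ y ∈ K, g y0 ≤ g y := by
    intro y hy
    by_cases hcase : ∀ θ, m ≤ y θ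
    · exact hy0min ⟨fun θ => hcase θ, fun θ => hy θ⟩
    · push_neg at hcase
      obtain ⟨θ0, hθ0⟩ := hcase
      have h1 := hescape y hy θ0 hθ0
      have h2 : g y0 ≤ g L := hy0min hLB
      linarith
  -- uniqueness of minimizers of g on K
  have huniq : ∀ y1 y2 : Θ → ℝ, y1 ∈ K → y2 ∈ K → (∀ y ∈ K, g y1 ≤ g y) →
      (∀ y ∈ K, g y2 ≤ g y) → y1 = y2 := by
    intro y1 y2 h1 h2 hmin1 hmin2
    by_contra hne
    have hmem : ((1/2 : ℝ) • y1 + (1/2 : ℝ) • y2) ∈ K := by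
      intro θ
      have := h1 θ
      have := h2 θ
      simp only [Pi.add_apply, Pi.smul_apply, smul_eq_mul]
      linarith
    have hstrict := (gfun_strictConvexOn lam φ ε α v τ ρ hlam hφ hε hα hv hτ).2
      (Set.mem_univ y1) (Set.mem_univ y2) hne (by norm_num : (0:ℝ) < 1/2)
      (by norm_num : (0:ℝ) < 1/2) (by norm_num)
    simp only [smul_eq_mul] at hstrict
    have heq : g y1 = g y2 := le_antisymm (hmin1 y2 h2) (hmin2 y1 h1)
    have hle := hmin1 _ hmem
    simp only [← hgdef] at hstrict
    linarith
  constructor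
  · -- existence and uniqueness
    refine ⟨fun θ => Real.exp (y0 θ), ⟨hKS y0 hy0K, ?_⟩, ?_⟩
    · intro z hz
      rw [hWg, hWs z fun θ => (hz θ).1]
      exact hy0minK _ (hSK z hz)
    · intro s' hs'
      have hs'K : (fun θ => Real.log (s' θ)) ∈ K := hSK s' hs'.1
      have hs'min : ∀ y ∈ K, g (fun θ => Real.log (s' θ)) ≤ g y := by
        intro y hy
        rw [← hWs s' fun θ => (hs'.1 θ).1, ← hWg y]
        exact hs'.2 _ (hKS y hy)
      have := huniq _ y0 hs'K hy0K hs'min hy0minK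
      funext θ
      calc s' θ = Real.exp (Real.log (s' θ)) := (Real.exp_log (hs'.1 θ).1).symm
        _ = Real.exp (y0 θ) := by rw [congrFun this θ]
  · -- interiority
    intro s hs θ0
    have hpos : 0 < s θ0 := (hs.1 θ0).1
    refine ⟨hpos, ?_⟩
    by_contra hge
    push_neg at hge
    have heq : s θ0 = ρ θ0 := le_antisymm (hs.1 θ0).2 hge
    set r : ℝ := ρ θ0 with hrdef
    have hr : 0 < r := hρ θ0
    set Kg : Γ → ℝ := fun γ => ∑ θ ∈ Finset.univ.erase θ0, α γ θ * s θ * v γ θ with hKgdef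
    set C2 : ℝ := ∑ θ ∈ Finset.univ.erase θ0, τ θ * ρ θ * Real.log (s θ) with hC2def
    set C3 : ℝ := ∑ θ ∈ Finset.univ.erase θ0, τ θ * s θ with hC3def
    set h : ℝ → ℝ := fun x =>
      lam * ∑ γ : Γ, φ γ * Real.log (ε γ + (α γ θ0 * x * v γ θ0 + Kg γ))
        - (τ θ0 * ρ θ0 * Real.log x + C2) + (τ θ0 * x + C3) with hhdef
    have hWh : ∀ x : ℝ, W lam φ ε α v τ ρ (Function.update s θ0 x) = h x := by
      intro x
      unfold W
      have e1 : ∀ γ, ∑ θ : Θ, α γ θ * (Function.update s θ0 x θ) * v γ θ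
          = α γ θ0 * x * v γ θ0 + Kg γ :=
        fun γ => sum_update_aux (fun θ t => α γ θ * t * v γ θ) s θ0 x
      have e2 : ∑ θ : Θ, τ θ * ρ θ * Real.log (Function.update s θ0 x θ)
          = τ θ0 * ρ θ0 * Real.log x + C2 :=
        sum_update_aux (fun θ t => τ θ * ρ θ * Real.log t) s θ0 x
      have e3 : ∑ θ : Θ, τ θ * (Function.update s θ0 x θ) = τ θ0 * x + C3 :=
        sum_update_aux (fun θ t => τ θ * t) s θ0 x
      rw [hhdef]
      simp only [e1, e2, e3]
    have hKgpos : ∀ γ, 0 ≤ Kg γ := by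
      intro γ
      exact Finset.sum_nonneg fun θ hθ =>
        mul_nonneg (mul_nonneg (hα γ θ).le (hs.1 θ).1.le) (hv γ θ).le
    have hdenpos : ∀ γ (x : ℝ), 0 < x → 0 < ε γ + (α γ θ0 * x * v γ θ0 + Kg γ) := by
      intro γ x hx
      have h1 : 0 < α γ θ0 * x * v γ θ0 := mul_pos (mul_pos (hα γ θ0) hx) (hv γ θ0)
      linarith [hε γ, hKgpos γ]
    -- derivative of h at r
    have hd1 : ∀ γ, HasDerivAt (fun x => Real.log (ε γ + (α γ θ0 * x * v γ θ0 + Kg γ)))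
        (α γ θ0 * 1 * v γ θ0 / (ε γ + (α γ θ0 * r * v γ θ0 + Kg γ))) r := by
      intro γ
      have hinner : HasDerivAt (fun x => ε γ + (α γ θ0 * x * v γ θ0 + Kg γ))
          (α γ θ0 * 1 * v γ θ0) r := by
        exact ((((hasDerivAt_id r).const_mul (α γ θ0)).mul_const (v γ θ0)).add_const
          (Kg γ)).const_add (ε γ)
      exact hinner.log (hdenpos γ r hr).ne'
    have hdsum : HasDerivAt (fun x => ∑ γ : Γ, φ γ * Real.log (ε γ + (α γ θ0 * x * v γ θ0 + Kg γ)))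
        (∑ γ : Γ, φ γ * (α γ θ0 * 1 * v γ θ0 / (ε γ + (α γ θ0 * r * v γ θ0 + Kg γ)))) r :=
      HasDerivAt.fun_sum fun γ _ => (hd1 γ).const_mul (φ γ)
    have hp1 := hdsum.const_mul lam
    have hp2 : HasDerivAt (fun x => τ θ0 * ρ θ0 * Real.log x + C2)
        (τ θ0 * ρ θ0 * r⁻¹) r :=
      ((Real.hasDerivAt_log hr.ne').const_mul (τ θ0 * ρ θ0)).add_const C2
    have hp3 : HasDerivAt (fun x => τ θ0 * x + C3) (τ θ0 * 1) r :=
      ((hasDerivAt_id r).const_mul (τ θ0)).add_const C3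
    have hd : HasDerivAt h
        (lam * ∑ γ : Γ, φ γ * (α γ θ0 * 1 * v γ θ0 / (ε γ + (α γ θ0 * r * v γ θ0 + Kg γ)))
          - τ θ0 * ρ θ0 * r⁻¹ + τ θ0 * 1) r := by
      rw [hhdef]
      exact (hp1.sub hp2).add hp3
    have hD : 0 < lam * ∑ γ : Γ, φ γ *
        (α γ θ0 * 1 * v γ θ0 / (ε γ + (α γ θ0 * r * v γ θ0 + Kg γ)))
        - τ θ0 * ρ θ0 * r⁻¹ + τ θ0 * 1 := by
      have e : τ θ0 * ρ θ0 * r⁻¹ = τ θ0 := by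
        rw [hrdef, mul_assoc, mul_inv_cancel₀ (hρ θ0).ne', mul_one]
      have hsum : 0 < ∑ γ : Γ, φ γ *
          (α γ θ0 * 1 * v γ θ0 / (ε γ + (α γ θ0 * r * v γ θ0 + Kg γ))) := by
        refine Finset.sum_pos (fun γ _ => ?_) Finset.univ_nonempty
        have := hdenpos γ r hr
        have h1 : 0 < α γ θ0 * 1 * v γ θ0 := by
          have := hα γ θ0; have := hv γ θ0; positivity
        exact mul_pos (hφ γ) (div_pos h1 this)
      nlinarith [mul_pos hlam hsum]
    -- slope argument
    have hslope : Filter.Tendsto (slope h r) (nhdsWithin r (Set.Iio r)) (nhds _) :=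
      (hasDerivAt_iff_tendsto_slope.mp hd).mono_left
        (nhdsWithin_mono r fun z hz => ne_of_lt hz)
    have hev1 : ∀ᶠ x in nhdsWithin r (Set.Iio r), 0 < slope h r x :=
      hslope.eventually (eventually_gt_nhds hD)
    have hev2 : ∀ᶠ x in nhdsWithin r (Set.Iio r), 0 < x :=
      eventually_nhdsWithin_of_eventually_nhds (eventually_gt_nhds hr)
    have hev3 : ∀ᶠ x in nhdsWithin r (Set.Iio r), x ∈ Set.Iio r := self_mem_nhdsWithin
    obtain ⟨x, hxslope, hxpos, hxlt⟩ := (hev1.and (hev2.and hev3)).exists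
    have hxltr : x < r := hxlt
    have hhx : h x < h r := by
      rw [slope_def_field] at hxslope
      rcases div_pos_iff.mp hxslope with ⟨h1, h2⟩ | ⟨h1, h2⟩
      · linarith
      · linarith
    have hz : ∀ θ, 0 < Function.update s θ0 x θ ∧ Function.update s θ0 x θ ≤ ρ θ := by
      intro θ
      by_cases hθ : θ = θ0
      · subst hθ
        rw [Function.update_self]
        exact ⟨hxpos, hxltr.le⟩
      · rw [Function.update_of_ne hθ]
        exact hs.1 θ
    have hmin := hs.2 _ hz
    rw [hWh] at hmin
    have hWsr : W lam φ ε α v τ ρ s = h r := by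
      rw [← heq, ← hWh (s θ0), Function.update_eq_self]
    linarith [hmin, hhx, hWsr.le, hWsr.ge]
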